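/- Encode a finite bipartite multigraph Λ by finite vertex sets V₁, V₂ and a multiplicity function m : V₁ → V₂ → ℕ, where m(v, w) is the number of edges joining v and w. Let T, F be finite sets, n : T × F → ℕ, and let surjections τ : V₁ → T, φ : V₂ → F be an equitable realization of n on Λ. Let t₀ ∈ V₁ and f₀ ∈ V₂ with r := m(t₀, f₀) ≥ 1, and suppose there is a partition of the disjoint union V₁ ⊔ V₂ into two sets C and C' with f₀ ∈ C and t₀ ∈ C', such that for every pair (v, w) ∈ V₁ × V₂ with m(v, w) > 0 other than (t₀, f₀), the vertices v and w lie both in C or both in C'. Define the split multigraph Λ' by: V₁' = (V₁ ∩ C') ⊔ ((V₁ ∩ C) × {1, …, r}) and V₂' = (V₂ ∩ C') ⊔ ((V₂ ∩ C) × {1, …, r}), with multiplicities m'(v, w) = m(v, w) for v, w ∈ C'; m'((v, i), (w, i)) = m(v, w) for v, w ∈ C and each 1 ≤ i ≤ r; m'(t₀, (f₀, i)) = 1 for each 1 ≤ i ≤ r; and m' = 0 in all other cases. Let τ' : V₁' → T and φ' : V₂' → F be obtained from τ and φ by forgetting the copy index. Then τ', φ' are an equitable realization of n on Λ'. -/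

import Mathlib

/-- `τ : V₁ → T` and `φ : V₂ → F` are an equitable realization of `n : T × F → ℕ` on the
finite bipartite multigraph encoded by the multiplicity function `m : V₁ → V₂ → ℕ`:
`τ` and `φ` are surjective; for every `v ∈ V₁` and `f ∈ F` the number of edges (counted
with multiplicity) from `v` to vertices `w` with `φ w = f` equals `n (τ v, f)`; and for
every `w ∈ V₂` and `t ∈ T` there is an edge from `w` to some `v` with `τ v = t` if and
only if `n (t, φ w) > 0`. -/
def MultiEquitablyRealizes {V₁ V₂ T F : Type} [Fintype V₂] [DecidableEq F]
    (n : T × F → ℕ) (m : V₁ → V₂ → ℕ) (τ : V₁ → T) (φ : V₂ → F) : Prop :=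
  Function.Surjective τ ∧ Function.Surjective φ ∧
  (∀ (v : V₁) (f : F), (∑ w : V₂, if φ w = f then m v w else 0) = n (τ v, f)) ∧
  (∀ (w : V₂) (t : T), (∃ v : V₁, τ v = t ∧ 0 < m v w) ↔ 0 < n (t, φ w))

section Split

variable {V₁ V₂ T F : Type} [DecidableEq V₁] [DecidableEq V₂]

/-- The `V₁`-side vertex set of the multigraph obtained by splitting along the partition
`(C, Cᶜ)`: the `V₁`-vertices in `Cᶜ = C'` are kept, and the `V₁`-vertices in `C` are
replaced by `r` copies. -/
abbrev SplitL (C : Finset (V₁ ⊕ V₂)) (r : ℕ) : Type :=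
  {v : V₁ // Sum.inl v ∉ C} ⊕ ({v : V₁ // Sum.inl v ∈ C} × Fin r)

/-- The `V₂`-side vertex set of the split multigraph. -/
abbrev SplitR (C : Finset (V₁ ⊕ V₂)) (r : ℕ) : Type :=
  {w : V₂ // Sum.inr w ∉ C} ⊕ ({w : V₂ // Sum.inr w ∈ C} × Fin r)

/-- The multiplicity function of the split multigraph `Λ'`: multiplicities within `C'` are
unchanged; multiplicities within the `i`-th copy of `C` are those of `C`; the distinguished
vertex `t₀ ∈ C'` is joined by a single edge to each copy `(f₀, i)` of the distinguished
vertex `f₀ ∈ C`; and all other multiplicities are `0`. -/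
def splitMult (m : V₁ → V₂ → ℕ) (t₀ : V₁) (f₀ : V₂) (C : Finset (V₁ ⊕ V₂)) (r : ℕ) :
    SplitL C r → SplitR C r → ℕ
  | Sum.inl v, Sum.inl w => m v.1 w.1
  | Sum.inl v, Sum.inr (w, _) => if v.1 = t₀ ∧ w.1 = f₀ then 1 else 0
  | Sum.inr (v, i), Sum.inr (w, j) => if i = j then m v.1 w.1 else 0
  | Sum.inr _, Sum.inl _ => 0

/-- The map `τ' : V₁' → T` obtained from `τ` by forgetting the copy index. -/
def splitTau (τ : V₁ → T) (C : Finset (V₁ ⊕ V₂)) (r : ℕ) : SplitL C r → T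
  | Sum.inl v => τ v.1
  | Sum.inr (v, _) => τ v.1

/-- The map `φ' : V₂' → F` obtained from `φ` by forgetting the copy index. -/
def splitPhi (φ : V₂ → F) (C : Finset (V₁ ⊕ V₂)) (r : ℕ) : SplitR C r → F
  | Sum.inl w => φ w.1
  | Sum.inr (w, _) => φ w.1

end Split

/-- Splitting a vertex preserves equitable realizations: if `τ, φ` equitably realize `n` on
the bipartite multigraph `m`, `r = m t₀ f₀ ≥ 1`, and `(C, Cᶜ)` is a partition of `V₁ ⊕ V₂`
with `f₀ ∈ C`, `t₀ ∉ C`, such that every pair `(v, w) ≠ (t₀, f₀)` with `m v w > 0` lies on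
one side of the partition, then the induced maps `τ', φ'` equitably realize `n` on the split
multigraph. -/
theorem splitMult_equitablyRealizes {V₁ V₂ T F : Type}
    [Fintype V₁] [Fintype V₂] [DecidableEq V₁] [DecidableEq V₂] [DecidableEq F]
    (n : T × F → ℕ) (m : V₁ → V₂ → ℕ) (τ : V₁ → T) (φ : V₂ → F)
    (hreal : MultiEquitablyRealizes n m τ φ)
    (t₀ : V₁) (f₀ : V₂) (hr : 1 ≤ m t₀ f₀)
    (C : Finset (V₁ ⊕ V₂))
    (hf₀ : Sum.inr f₀ ∈ C) (ht₀ : Sum.inl t₀ ∉ C)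
    (hsep : ∀ (v : V₁) (w : V₂), 0 < m v w → (v, w) ≠ (t₀, f₀) →
      (Sum.inl v ∈ C ↔ Sum.inr w ∈ C)) :
    MultiEquitablyRealizes n (splitMult m t₀ f₀ C (m t₀ f₀))
      (splitTau τ C (m t₀ f₀)) (splitPhi φ C (m t₀ f₀)) := by
  classical
  obtain ⟨hτ, hφ, hdeg, hedge⟩ := hreal
  -- if `v ∉ C`, `w ∈ C` and `(v,w) ≠ (t₀,f₀)` then there is no edge
  have hz : ∀ (v : V₁) (w : V₂), Sum.inl v ∉ C → Sum.inr w ∈ C →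
      ¬(v = t₀ ∧ w = f₀) → m v w = 0 := by
    intro v w hv hw hne
    by_contra h
    exact hv (((hsep v w (Nat.pos_of_ne_zero h)
      (by simp [Prod.ext_iff, hne])).2 hw))
  have hz' : ∀ (v : V₁) (w : V₂), Sum.inl v ∈ C → Sum.inr w ∉ C → m v w = 0 := by
    intro v w hv hw
    by_contra h
    have hne : (v, w) ≠ (t₀, f₀) := by
      intro h'
      rw [Prod.mk.injEq] at h'
      exact ht₀ (h'.1 ▸ hv)
    exact hw ((hsep v w (Nat.pos_of_ne_zero h) hne).1 hv)
  have hsplit : ∀ g : V₂ → ℕ,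
      (∑ w : {w : V₂ // Sum.inr w ∉ C}, g w.1)
        + (∑ w : {w : V₂ // Sum.inr w ∈ C}, g w.1) = ∑ w : V₂, g w := by
    intro g
    rw [← Finset.sum_filter_add_sum_filter_not Finset.univ
      (fun w => Sum.inr w ∈ C) g, add_comm]
    congr 1
    · rw [← Finset.sum_subtype (Finset.univ.filter fun w => Sum.inr w ∈ C)
        (by simp) (fun w => g w)]
    · rw [← Finset.sum_subtype (Finset.univ.filter fun w => Sum.inr w ∉ C)
        (by simp) (fun w => g w)]
  refine ⟨?_, ?_, ?_, ?_⟩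
  · intro t
    obtain ⟨v, hv⟩ := hτ t
    by_cases h : Sum.inl v ∈ C
    · exact ⟨Sum.inr (⟨v, h⟩, ⟨0, hr⟩), hv⟩
    · exact ⟨Sum.inl ⟨v, h⟩, hv⟩
  · intro f
    obtain ⟨w, hw⟩ := hφ f
    by_cases h : Sum.inr w ∈ C
    · exact ⟨Sum.inr (⟨w, h⟩, ⟨0, hr⟩), hw⟩
    · exact ⟨Sum.inl ⟨w, h⟩, hw⟩
  · rintro (⟨v, hv⟩ | ⟨⟨v, hv⟩, i⟩) f
    · -- v ∉ C
      rw [Fintype.sum_sum_type]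
      simp only [splitMult, splitPhi, splitTau, Fintype.sum_prod_type]
      rw [← hdeg v f, ← hsplit (fun w => if φ w = f then m v w else 0)]
      congr 1
      apply Finset.sum_congr rfl
      intro w _
      by_cases hvw : v = t₀ ∧ w.1 = f₀
      · obtain ⟨rfl, hw⟩ := hvw
        by_cases hf : φ w.1 = f <;> simp [hw, hf, Finset.sum_const]
      · rw [hz v w.1 hv w.2 hvw]
        simp [hvw]
    · -- v ∈ C, copy i
      rw [Fintype.sum_sum_type]
      simp only [splitMult, splitPhi, splitTau, Fintype.sum_prod_type]
      rw [← hdeg v f, ← hsplit (fun w => if φ w = f then m v w else 0)]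
      congr 1
      · apply Finset.sum_congr rfl
        intro w _
        rw [hz' v w.1 hv w.2]
        exact (ite_self (0 : ℕ)).trans (ite_self 0).symm
      · apply Finset.sum_congr rfl
        intro w _
        by_cases hwf : φ w.1 = f
        · simp only [hwf, if_true]
          rw [Finset.sum_ite_eq Finset.univ i (fun _ => m v w.1)]
          simp
        · simp [hwf]
  · rintro (⟨w, hw⟩ | ⟨⟨w, hw⟩, i⟩) t
    · -- w ∉ C
      rw [show splitPhi φ C (m t₀ f₀) (Sum.inl ⟨w, hw⟩) = φ w from rfl,
        ← hedge w t]
      constructor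
      · rintro ⟨(⟨v, hv⟩ | ⟨⟨v, hv⟩, i⟩), hvt, hpos⟩
        · exact ⟨v, hvt, hpos⟩
        · simp [splitMult] at hpos
      · rintro ⟨v, hvt, hpos⟩
        have hvC : Sum.inl v ∉ C := by
          intro h
          exact hpos.ne' (hz' v w h hw)
        exact ⟨Sum.inl ⟨v, hvC⟩, hvt, hpos⟩
    · -- w ∈ C, copy i
      rw [show splitPhi φ C (m t₀ f₀) (Sum.inr (⟨w, hw⟩, i)) = φ w from rfl,
        ← hedge w t]
      constructor
      · rintro ⟨(⟨v, hv⟩ | ⟨⟨v, hv⟩, j⟩), hvt, hpos⟩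
        · simp only [splitMult] at hpos
          split at hpos
          · next h =>
            obtain ⟨h1, h2⟩ := h
            exact ⟨v, hvt, by rw [h1, h2]; exact hr⟩
          · exact absurd hpos (by simp)
        · simp only [splitMult] at hpos
          split at hpos
          · exact ⟨v, hvt, hpos⟩
          · exact absurd hpos (by simp)
      · rintro ⟨v, hvt, hpos⟩
        by_cases hvC : Sum.inl v ∈ C
        · exact ⟨Sum.inr (⟨v, hvC⟩, i), hvt, by simpa [splitMult] using hpos⟩
        · have : v = t₀ ∧ w = f₀ := by
            by_contra h
            exact hpos.ne' (hz v w hvC hw h)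
          obtain ⟨rfl, rfl⟩ := this
          exact ⟨Sum.inl ⟨v, hvC⟩, hvt, by simp [splitMult]⟩
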